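/- For a Hermitian matrix-valued measurable function S : T² → Matrix (Fin p) (Fin p) ℂ with continuous dependence, the spectrum of the multiplication operator by S on L²(T², ℂ^p) equals the union over k = 1,…,p of the intervals [inf λₖ, sup λₖ], where λ₁(x) ≥ ⋯ ≥ λ_p(x) are the eigenvalues of S(x) in non-increasing order. -/

import Mathlib

open Matrix MeasureTheory Real

set_option maxHeartbeats 1000000

noncomputable section

instance : Fact (0 < 2 * π) := ⟨by positivity⟩

/-- The two-dimensional torus. -/
abbrev Torus2 : Type := AddCircle (2 * π) × AddCircle (2 * π)

namespace SpecMulAux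


variable {p : ℕ}

def mvE (A : Matrix (Fin p) (Fin p) ℂ) (w : EuclideanSpace ℂ (Fin p)) :
    EuclideanSpace ℂ (Fin p) := WithLp.toLp 2 (A *ᵥ w)

/-- real quadratic form -/
lemma mvE_mul (A B : Matrix (Fin p) (Fin p) ℂ) (w : EuclideanSpace ℂ (Fin p)) :
    mvE (A * B) w = mvE A (mvE B w) := by simp [mvE, Matrix.mulVec_mulVec]

lemma mvE_one (w : EuclideanSpace ℂ (Fin p)) : mvE 1 w = w := by simp [mvE]

lemma mvE_sub (A B : Matrix (Fin p) (Fin p) ℂ) (w : EuclideanSpace ℂ (Fin p)) :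
    mvE (A - B) w = mvE A w - mvE B w := by simp [mvE, Matrix.sub_mulVec]

lemma mvE_smul_one (c : ℂ) (w : EuclideanSpace ℂ (Fin p)) : mvE (c • 1) w = c • w := by
  show WithLp.toLp 2 ((c • (1 : Matrix (Fin p) (Fin p) ℂ)) *ᵥ w) = c • w
  rw [Matrix.smul_mulVec, Matrix.one_mulVec]
  rfl

lemma mvE_zero (A : Matrix (Fin p) (Fin p) ℂ) : mvE A 0 = 0 := by simp [mvE]

def qf (A : Matrix (Fin p) (Fin p) ℂ) (v : EuclideanSpace ℂ (Fin p)) : ℝ :=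
  RCLike.re (inner (𝕜 := ℂ) v (mvE A v))

variable {A : Matrix (Fin p) (Fin p) ℂ} (hA : A.IsHermitian)

lemma mvE_eigenvectorBasis (j : Fin p) :
    mvE A (hA.eigenvectorBasis j) = (hA.eigenvalues j : ℂ) • hA.eigenvectorBasis j := by
  have h := hA.mulVec_eigenvectorBasis j
  ext i
  have := congrFun h i
  simpa [mvE] using this

lemma repr_mvE (v : EuclideanSpace ℂ (Fin p)) (j : Fin p) :
    hA.eigenvectorBasis.repr (mvE A v) j = (hA.eigenvalues j : ℂ)
      * hA.eigenvectorBasis.repr v j := by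
  have hsymm : (Matrix.toEuclideanLin A).IsSymmetric :=
    Matrix.isHermitian_iff_isSymmetric.1 hA
  have hEL : ∀ w : EuclideanSpace ℂ (Fin p), Matrix.toEuclideanLin A w = mvE A w := by
    intro w; rfl
  rw [OrthonormalBasis.repr_apply_apply, OrthonormalBasis.repr_apply_apply,
    ← hEL, ← hsymm (hA.eigenvectorBasis j) v, hEL, mvE_eigenvectorBasis hA]
  rw [inner_smul_left]
  simp

lemma qf_eq_sum (v : EuclideanSpace ℂ (Fin p)) :
    qf A v = ∑ j, hA.eigenvalues j * ‖hA.eigenvectorBasis.repr v j‖ ^ 2 := by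
  have h := hA.eigenvectorBasis.repr.inner_map_map v (mvE A v)
  rw [qf, ← h, PiLp.inner_apply]
  simp only [RCLike.inner_apply, repr_mvE hA]
  rw [map_sum]
  congr 1
  funext j
  rw [show (hA.eigenvalues j : ℂ) * hA.eigenvectorBasis.repr v j
        * (starRingEnd ℂ) (hA.eigenvectorBasis.repr v j)
      = (hA.eigenvalues j : ℂ) * ((starRingEnd ℂ) (hA.eigenvectorBasis.repr v j)
        * hA.eigenvectorBasis.repr v j) by ring, RCLike.conj_mul]
  simp [← Complex.ofReal_pow]

lemma norm_sq_eq_sum_repr (v : EuclideanSpace ℂ (Fin p)) :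
    ‖v‖ ^ 2 = ∑ j, ‖hA.eigenvectorBasis.repr v j‖ ^ 2 := by
  rw [← hA.eigenvectorBasis.repr.norm_map v, EuclideanSpace.norm_eq,
    Real.sq_sqrt (by positivity)]


section span

variable (b : OrthonormalBasis (Fin p) ℂ (EuclideanSpace ℂ (Fin p)))

lemma repr_eq_zero_of_mem_span {s : Finset (Fin p)} {v : EuclideanSpace ℂ (Fin p)}
    (hv : v ∈ Submodule.span ℂ (b '' ↑s)) {j : Fin p} (hj : j ∉ s) :
    b.repr v j = 0 := by
  rw [OrthonormalBasis.repr_apply_apply]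
  induction hv using Submodule.span_induction with
  | mem x hx =>
    obtain ⟨m, hm, rfl⟩ := hx
    exact b.orthonormal.2 (fun h => hj (h ▸ hm))
  | zero => simp
  | add x y _ _ hx hy => rw [inner_add_right, hx, hy, add_zero]
  | smul c x _ hx => rw [inner_smul_right, hx, mul_zero]

lemma finrank_span_image (s : Finset (Fin p)) :
    Module.finrank ℂ (Submodule.span ℂ (b '' ↑s)) = s.card := by
  have hli : LinearIndependent ℂ (fun i : s => b i) :=
    b.orthonormal.linearIndependent.comp _ Subtype.val_injective
  have : Set.range (fun i : s => b i) = b '' ↑s := (Set.image_eq_range ⇑b ↑s).symm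
  rw [← this, finrank_span_eq_card hli, Fintype.card_coe]

lemma exists_unit_vector_mem_inf (bA bB : OrthonormalBasis (Fin p) ℂ (EuclideanSpace ℂ (Fin p)))
    (s t : Finset (Fin p)) (h : p < s.card + t.card) :
    ∃ v : EuclideanSpace ℂ (Fin p), ‖v‖ = 1 ∧
      v ∈ Submodule.span ℂ (bA '' ↑s) ∧ v ∈ Submodule.span ℂ (bB '' ↑t) := by
  set E1 := Submodule.span ℂ (bA '' ↑s)
  set E2 := Submodule.span ℂ (bB '' ↑t)
  have hdim : 0 < Module.finrank ℂ ↥(E1 ⊓ E2) := by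
    have hsum := Submodule.finrank_sup_add_finrank_inf_eq E1 E2
    have h1 : Module.finrank ℂ ↥E1 = s.card := finrank_span_image bA s
    have h2 : Module.finrank ℂ ↥E2 = t.card := finrank_span_image bB t
    have hle : Module.finrank ℂ ↥(E1 ⊔ E2) ≤ p := by
      have := Submodule.finrank_le (E1 ⊔ E2)
      simpa [finrank_euclideanSpace] using this
    omega
  have hnt : Nontrivial ↥(E1 ⊓ E2) := Module.finrank_pos_iff.1 hdim
  obtain ⟨⟨v, hvmem⟩, hvne⟩ := exists_ne (0 : ↥(E1 ⊓ E2))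
  have hv0 : v ≠ 0 := by
    intro h0
    exact hvne (by simp [h0])
  refine ⟨‖v‖⁻¹ • v, ?_, ?_, ?_⟩
  · rw [norm_smul]
    simp [norm_ne_zero_iff.2 hv0]
  · exact E1.smul_of_tower_mem _ (hvmem.1)
  · exact E2.smul_of_tower_mem _ (hvmem.2)

end span

section weyl

lemma qf_ge_of_mem_span {A : Matrix (Fin p) (Fin p) ℂ} (hA : A.IsHermitian)
    {s : Finset (Fin p)} {t : ℝ} (hs : ∀ j ∈ s, t ≤ hA.eigenvalues j)
    {v : EuclideanSpace ℂ (Fin p)}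
    (hv : v ∈ Submodule.span ℂ (hA.eigenvectorBasis '' ↑s)) :
    t * ‖v‖ ^ 2 ≤ qf A v := by
  rw [qf_eq_sum hA, norm_sq_eq_sum_repr hA v, Finset.mul_sum]
  apply Finset.sum_le_sum
  intro j _
  by_cases hj : j ∈ s
  · have := hs j hj
    nlinarith [sq_nonneg ‖hA.eigenvectorBasis.repr v j‖]
  · rw [repr_eq_zero_of_mem_span _ hv hj]
    simp

lemma qf_le_of_mem_span {A : Matrix (Fin p) (Fin p) ℂ} (hA : A.IsHermitian)
    {s : Finset (Fin p)} {t : ℝ} (hs : ∀ j ∈ s, hA.eigenvalues j ≤ t)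
    {v : EuclideanSpace ℂ (Fin p)}
    (hv : v ∈ Submodule.span ℂ (hA.eigenvectorBasis '' ↑s)) :
    qf A v ≤ t * ‖v‖ ^ 2 := by
  rw [qf_eq_sum hA, norm_sq_eq_sum_repr hA v, Finset.mul_sum]
  apply Finset.sum_le_sum
  intro j _
  by_cases hj : j ∈ s
  · have := hs j hj
    nlinarith [sq_nonneg ‖hA.eigenvectorBasis.repr v j‖]
  · rw [repr_eq_zero_of_mem_span _ hv hj]
    simp

lemma qf_sub (A B : Matrix (Fin p) (Fin p) ℂ) (v : EuclideanSpace ℂ (Fin p)) :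
    qf A v - qf B v = qf (A - B) v := by
  unfold qf
  rw [mvE_sub, inner_sub_right, map_sub]

/-- One-sided Weyl inequality. -/
lemma weyl_one_sided {A B : Matrix (Fin p) (Fin p) ℂ} (hA : A.IsHermitian)
    (hB : B.IsHermitian) {μA μB : Fin p → ℝ} {σA σB : Equiv.Perm (Fin p)}
    (hμA : μA = hA.eigenvalues ∘ σA) (hμB : μB = hB.eigenvalues ∘ σB)
    (hA_anti : Antitone μA) (hB_anti : Antitone μB) (k : Fin p) {c : ℝ}
    (hc : ∀ v : EuclideanSpace ℂ (Fin p), ‖v‖ = 1 → qf (A - B) v ≤ c) :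
    μA k ≤ μB k + c := by
  set s : Finset (Fin p) := (Finset.Iic k).image σA with hs
  set t : Finset (Fin p) := (Finset.Ici k).image σB with ht
  have hcards : s.card = (k : ℕ) + 1 := by
    rw [hs, Finset.card_image_of_injective _ σA.injective, Fin.card_Iic]
  have hcardt : t.card = p - (k : ℕ) := by
    rw [ht, Finset.card_image_of_injective _ σB.injective, Fin.card_Ici]
  obtain ⟨v, hv1, hvs, hvt⟩ := exists_unit_vector_mem_inf hA.eigenvectorBasis
    hB.eigenvectorBasis s t (by have := k.isLt; omega)
  have h1 : μA k * 1 ≤ qf A v := by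
    have := qf_ge_of_mem_span hA (s := s) (t := μA k) ?_ hvs
    · simpa [hv1] using this
    · intro j hj
      obtain ⟨i, hi, rfl⟩ := Finset.mem_image.1 hj
      have : μA i = hA.eigenvalues (σA i) := by rw [hμA]; rfl
      rw [← this]
      exact hA_anti (Finset.mem_Iic.1 hi)
  have h2 : qf B v ≤ μB k * 1 := by
    have := qf_le_of_mem_span hB (s := t) (t := μB k) ?_ hvt
    · simpa [hv1] using this
    · intro j hj
      obtain ⟨i, hi, rfl⟩ := Finset.mem_image.1 hj
      have : μB i = hB.eigenvalues (σB i) := by rw [hμB]; rfl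
      rw [← this]
      exact hB_anti (Finset.mem_Ici.1 hi)
  have h3 : qf A v - qf B v ≤ c := by rw [qf_sub]; exact hc v hv1
  linarith

end weyl


section bound

lemma coord_le_norm (w : EuclideanSpace ℂ (Fin p)) (i : Fin p) : ‖w i‖ ≤ ‖w‖ := by
  have h1 : ‖w i‖ ^ 2 ≤ ∑ j, ‖w j‖ ^ 2 :=
    Finset.single_le_sum (fun j _ => sq_nonneg ‖w j‖) (Finset.mem_univ i)
  have h2 : ‖w‖ ^ 2 = ∑ j, ‖w j‖ ^ 2 := by
    rw [EuclideanSpace.norm_eq, Real.sq_sqrt (by positivity)]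
  nlinarith [norm_nonneg w, norm_nonneg (w i)]

lemma norm_le_sum_coord (w : EuclideanSpace ℂ (Fin p)) : ‖w‖ ≤ ∑ i, ‖w i‖ := by
  have h2 : ‖w‖ ^ 2 = ∑ j, ‖w j‖ ^ 2 := by
    rw [EuclideanSpace.norm_eq, Real.sq_sqrt (by positivity)]
  have h3 : ∑ j, ‖w j‖ ^ 2 ≤ (∑ j, ‖w j‖) ^ 2 :=
    Finset.sum_sq_le_sq_sum_of_nonneg (fun j _ => norm_nonneg _)
  have h4 : (0:ℝ) ≤ ∑ j, ‖w j‖ := Finset.sum_nonneg fun j _ => norm_nonneg _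
  nlinarith [norm_nonneg w]

/-- entrywise bound for the matrix action. -/
lemma norm_mvE_le (A : Matrix (Fin p) (Fin p) ℂ) (w : EuclideanSpace ℂ (Fin p)) :
    ‖mvE A w‖ ≤ (∑ i, ∑ j, ‖A i j‖) * ‖w‖ := by
  refine (norm_le_sum_coord _).trans ?_
  rw [Finset.sum_mul]
  apply Finset.sum_le_sum
  intro i _
  have : ‖mvE A w i‖ ≤ ∑ j, ‖A i j‖ * ‖w j‖ := by
    rw [show mvE A w i = ∑ j, A i j * w j from rfl]
    refine (norm_sum_le _ _).trans ?_
    apply Finset.sum_le_sum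
    intro j _
    rw [norm_mul]
  refine this.trans ?_
  rw [Finset.sum_mul]
  apply Finset.sum_le_sum
  intro j _
  exact mul_le_mul_of_nonneg_left (coord_le_norm w j) (norm_nonneg _)

lemma qf_le_entry_sum (A : Matrix (Fin p) (Fin p) ℂ) (v : EuclideanSpace ℂ (Fin p))
    (hv : ‖v‖ = 1) : qf A v ≤ ∑ i, ∑ j, ‖A i j‖ := by
  have h1 : qf A v ≤ ‖(inner ℂ v (mvE A v) : ℂ)‖ := by
    rw [qf]
    exact RCLike.re_le_norm _
  have h2 : ‖(inner ℂ v (mvE A v) : ℂ)‖ ≤ ‖v‖ * ‖mvE A v‖ := norm_inner_le_norm _ _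
  have h3 := norm_mvE_le A v
  rw [hv] at h2 h3
  simpa using h1.trans (h2.trans (by simpa using h3))

/-- Weyl two-sided: eigenvalue distance bounded by entry sums. -/
lemma weyl_entry_bound {A B : Matrix (Fin p) (Fin p) ℂ} (hA : A.IsHermitian)
    (hB : B.IsHermitian) {μA μB : Fin p → ℝ} {σA σB : Equiv.Perm (Fin p)}
    (hμA : μA = hA.eigenvalues ∘ σA) (hμB : μB = hB.eigenvalues ∘ σB)
    (hA_anti : Antitone μA) (hB_anti : Antitone μB) (k : Fin p) :
    |μA k - μB k| ≤ ∑ i, ∑ j, ‖(A - B) i j‖ := by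
  rw [abs_sub_le_iff]
  constructor
  · have := weyl_one_sided hA hB hμA hμB hA_anti hB_anti k
      (c := ∑ i, ∑ j, ‖(A - B) i j‖) (fun v hv => qf_le_entry_sum _ v hv)
    linarith
  · have := weyl_one_sided hB hA hμB hμA hB_anti hA_anti k
      (c := ∑ i, ∑ j, ‖(B - A) i j‖) (fun v hv => qf_le_entry_sum _ v hv)
    have he : ∑ i, ∑ j, ‖(B - A) i j‖ = ∑ i, ∑ j, ‖(A - B) i j‖ := by
      congr 1; funext i; congr 1; funext j
      rw [show (B - A) i j = -((A - B) i j) by simp, norm_neg]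
    linarith

end bound


section spec

lemma spectrum_complex {A : Matrix (Fin p) (Fin p) ℂ} (hA : A.IsHermitian) :
    spectrum ℂ A = Set.range (fun i => (hA.eigenvalues i : ℂ)) := by
  conv_lhs => rw [hA.spectral_theorem, Unitary.conjStarAlgAut_apply, Unitary.spectrum_star_right_conjugate]
  rw [spectrum_diagonal]
  ext z
  simp [Function.comp]

end spec



section op

variable (T : Torus2 → Matrix (Fin p) (Fin p) ℂ)

lemma mvE_add (A : Matrix (Fin p) (Fin p) ℂ) (w₁ w₂ : EuclideanSpace ℂ (Fin p)) :
    mvE A (w₁ + w₂) = mvE A w₁ + mvE A w₂ := by simp [mvE, Matrix.mulVec_add]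

lemma mvE_smulv (A : Matrix (Fin p) (Fin p) ℂ) (c : ℂ) (w : EuclideanSpace ℂ (Fin p)) :
    mvE A (c • w) = c • mvE A w := by simp [mvE, Matrix.mulVec_smul]

lemma continuous_mvE_uncurried :
    Continuous fun q : Matrix (Fin p) (Fin p) ℂ × EuclideanSpace ℂ (Fin p) => mvE q.1 q.2 := by
  apply (PiLp.continuous_toLp 2 _).comp
  apply continuous_pi
  intro i
  show Continuous fun q : Matrix (Fin p) (Fin p) ℂ × EuclideanSpace ℂ (Fin p) =>
    ∑ j, q.1 i j * q.2 j
  apply continuous_finset_sum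
  intro j _
  exact ((continuous_apply j).comp ((continuous_apply i).comp continuous_fst)).mul
    ((PiLp.continuous_apply 2 _ j).comp continuous_snd)

instance : TopologicalSpace.PseudoMetrizableSpace (Matrix (Fin p) (Fin p) ℂ) :=
  inferInstanceAs (TopologicalSpace.PseudoMetrizableSpace (Fin p → Fin p → ℂ))

instance : SecondCountableTopology (Matrix (Fin p) (Fin p) ℂ) :=
  inferInstanceAs (SecondCountableTopology (Fin p → Fin p → ℂ))

lemma aesm_mulFun (hT : Continuous T) {f : Torus2 → EuclideanSpace ℂ (Fin p)}
    (hf : AEStronglyMeasurable f volume) :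
    AEStronglyMeasurable (fun x => mvE (T x) (f x)) volume :=
  continuous_mvE_uncurried.comp_aestronglyMeasurable (hT.aestronglyMeasurable.prodMk hf)

lemma exists_bound (hT : Continuous T) :
    ∃ C : ℝ, 0 ≤ C ∧ ∀ (x : Torus2) (w : EuclideanSpace ℂ (Fin p)),
      ‖mvE (T x) w‖ ≤ C * ‖w‖ := by
  have hF : Continuous fun x : Torus2 => ∑ i, ∑ j, ‖T x i j‖ := by
    apply continuous_finset_sum; intro i _
    apply continuous_finset_sum; intro j _
    exact ((continuous_apply j).comp ((continuous_apply i).comp hT)).norm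
  obtain ⟨C, hC⟩ := (isCompact_range hF).bddAbove
  refine ⟨max C 0, le_max_right _ _, fun x w => ?_⟩
  refine (norm_mvE_le (T x) w).trans ?_
  apply mul_le_mul_of_nonneg_right _ (norm_nonneg w)
  exact le_max_of_le_left (hC ⟨x, rfl⟩)

lemma memℒp_mulFun (hT : Continuous T)
    (f : Lp (E := EuclideanSpace ℂ (Fin p)) 2 (volume : Measure Torus2)) :
    MemLp (fun x => mvE (T x) (⇑f x)) 2 (volume : Measure Torus2) := by
  obtain ⟨C, hC0, hC⟩ := exists_bound T hT
  exact MemLp.of_le_mul (Lp.memLp f) (aesm_mulFun T hT (Lp.aestronglyMeasurable f))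
    (Filter.Eventually.of_forall fun x => hC x (⇑f x))

/-- The multiplication operator by a continuous matrix symbol, as a linear map. -/
def mulOpL (hT : Continuous T) :
    Lp (E := EuclideanSpace ℂ (Fin p)) 2 (volume : Measure Torus2) →ₗ[ℂ]
    Lp (E := EuclideanSpace ℂ (Fin p)) 2 (volume : Measure Torus2) where
  toFun f := (memℒp_mulFun T hT f).toLp _
  map_add' f g := by
    have h1 : (fun x => mvE (T x) (⇑(f + g) x)) =ᵐ[(volume : Measure Torus2)]
        (fun x => mvE (T x) (⇑f x)) + fun x => mvE (T x) (⇑g x) := by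
      filter_upwards [Lp.coeFn_add f g] with x hx
      show mvE (T x) (⇑(f + g) x) = mvE (T x) (⇑f x) + mvE (T x) (⇑g x)
      rw [hx]
      show mvE (T x) (⇑f x + ⇑g x) = _
      rw [mvE_add]
    exact (MemLp.toLp_congr _ ((memℒp_mulFun T hT f).add (memℒp_mulFun T hT g)) h1).trans
      (MemLp.toLp_add _ _)
  map_smul' c f := by
    have h1 : (fun x => mvE (T x) (⇑(c • f) x)) =ᵐ[(volume : Measure Torus2)]
        c • fun x => mvE (T x) (⇑f x) := by
      filter_upwards [Lp.coeFn_smul c f] with x hx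
      show mvE (T x) (⇑(c • f) x) = c • mvE (T x) (⇑f x)
      rw [hx]
      show mvE (T x) (c • ⇑f x) = _
      rw [mvE_smulv]
    show (memℒp_mulFun T hT (c • f)).toLp _ = c • (memℒp_mulFun T hT f).toLp _
    exact (MemLp.toLp_congr (memℒp_mulFun T hT (c • f))
      ((memℒp_mulFun T hT f).const_smul c) h1).trans (MemLp.toLp_const_smul _ _)

/-- The multiplication operator by a continuous matrix symbol. -/
def mulOp (hT : Continuous T) :
    Lp (E := EuclideanSpace ℂ (Fin p)) 2 (volume : Measure Torus2) →L[ℂ]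
    Lp (E := EuclideanSpace ℂ (Fin p)) 2 (volume : Measure Torus2) := by
  apply (mulOpL T hT).mkContinuousOfExistsBound
  obtain ⟨C, hC0, hC⟩ := exists_bound T hT
  refine ⟨C, fun f => ?_⟩
  show ‖(memℒp_mulFun T hT f).toLp _‖ ≤ C * ‖f‖
  rw [Lp.norm_toLp]
  have h1 : eLpNorm (fun x => mvE (T x) (⇑f x)) 2 (volume : Measure Torus2) ≤
      eLpNorm ((C : ℝ) • ⇑f) 2 (volume : Measure Torus2) := by
    apply eLpNorm_mono_ae
    apply Filter.Eventually.of_forall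
    intro x
    show ‖mvE (T x) (⇑f x)‖ ≤ ‖C • ⇑f x‖
    rw [norm_smul, Real.norm_eq_abs, abs_of_nonneg hC0]
    exact hC x _
  rw [eLpNorm_const_smul] at h1
  have h2 := ENNReal.toReal_mono ?fin h1
  case fin =>
    apply ENNReal.mul_ne_top ENNReal.coe_ne_top
    exact (Lp.eLpNorm_lt_top f).ne
  refine h2.trans ?_
  rw [ENNReal.toReal_mul, toReal_enorm]
  apply mul_le_mul_of_nonneg_right
  · simp [Real.norm_eq_abs, abs_of_nonneg hC0]
  · exact ENNReal.toReal_nonneg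

lemma mulOp_coeFn (hT : Continuous T)
    (f : Lp (E := EuclideanSpace ℂ (Fin p)) 2 (volume : Measure Torus2)) :
    ⇑(mulOp T hT f) =ᵐ[(volume : Measure Torus2)] fun x => mvE (T x) (⇑f x) :=
  MemLp.coeFn_toLp (memℒp_mulFun T hT f)

end op


section mu

variable {S : Torus2 → Matrix (Fin p) (Fin p) ℂ} (hScont : Continuous S)
  (hSHerm : ∀ x, (S x).IsHermitian) {μ : Torus2 → Fin p → ℝ}
  (hμanti : ∀ x, Antitone (μ x))
  (hμeig : ∀ x, ∃ σ : Equiv.Perm (Fin p), μ x = (hSHerm x).eigenvalues ∘ σ)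

include hScont hμanti hμeig in
lemma continuous_mu (k : Fin p) : Continuous fun x => μ x k := by
  rw [continuous_iff_continuousAt]
  intro x
  have bound : ∀ y, dist (μ y k) (μ x k) ≤ ∑ i, ∑ j, ‖(S y - S x) i j‖ := by
    intro y
    obtain ⟨σy, hy⟩ := hμeig y
    obtain ⟨σx, hx⟩ := hμeig x
    simpa [Real.dist_eq] using
      weyl_entry_bound (hSHerm y) (hSHerm x) hy hx (hμanti y) (hμanti x) k
  have hcont : Continuous fun y : Torus2 => ∑ i, ∑ j, ‖(S y - S x) i j‖ := by
    apply continuous_finset_sum; intro i _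
    apply continuous_finset_sum; intro j _
    have : Continuous fun y : Torus2 => (S y - S x) i j := by
      have h1 : Continuous fun y : Torus2 => S y - S x := hScont.sub continuous_const
      exact (continuous_apply j).comp ((continuous_apply i).comp h1)
    exact this.norm
  have hzero : (fun y : Torus2 => ∑ i, ∑ j, ‖(S y - S x) i j‖) x = 0 := by simp
  rw [ContinuousAt, tendsto_iff_dist_tendsto_zero]
  apply squeeze_zero (fun y => dist_nonneg) bound
  have h2 := hcont.continuousAt (x := x)
  rw [ContinuousAt] at h2
  simpa using h2

end mu

section main

variable {S : Torus2 → Matrix (Fin p) (Fin p) ℂ}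
  (M : Lp (E := EuclideanSpace ℂ (Fin p)) 2 (volume : Measure Torus2) →L[ℂ]
       Lp (E := EuclideanSpace ℂ (Fin p)) 2 (volume : Measure Torus2))

lemma hM_mvE (hM : ∀ g, ∀ᵐ x : Torus2, ∀ i : Fin p,
      (M g : Torus2 → EuclideanSpace ℂ (Fin p)) x i =
        ∑ j, S x i j * (g : Torus2 → EuclideanSpace ℂ (Fin p)) x j)
    (g : Lp (E := EuclideanSpace ℂ (Fin p)) 2 (volume : Measure Torus2)) :
    ∀ᵐ x : Torus2, (M g : Torus2 → EuclideanSpace ℂ (Fin p)) x = mvE (S x)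
      ((g : Torus2 → EuclideanSpace ℂ (Fin p)) x) := by
  filter_upwards [hM g] with x hx
  ext i
  exact hx i

lemma exists_symbol_spectrum (hScont : Continuous S)
    (hM : ∀ g, ∀ᵐ x : Torus2, ∀ i : Fin p,
      (M g : Torus2 → EuclideanSpace ℂ (Fin p)) x i =
        ∑ j, S x i j * (g : Torus2 → EuclideanSpace ℂ (Fin p)) x j)
    {c : ℂ} (hc : c ∈ spectrum ℂ M) : ∃ x, c ∈ spectrum ℂ (S x) := by
  by_contra hcon
  push_neg at hcon
  have hunit : ∀ x, IsUnit (algebraMap ℂ (Matrix (Fin p) (Fin p) ℂ) c - S x) := by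
    intro x
    exact spectrum.notMem_iff.1 (hcon x)
  set Rm : Torus2 → Matrix (Fin p) (Fin p) ℂ :=
    fun x => algebraMap ℂ (Matrix (Fin p) (Fin p) ℂ) c - S x with hRm
  have hdet : ∀ x, IsUnit (Rm x).det := fun x => (Matrix.isUnit_iff_isUnit_det _).1 (hunit x)
  have hRmcont : Continuous Rm := by
    apply Continuous.sub _ hScont
    exact continuous_const
  set T : Torus2 → Matrix (Fin p) (Fin p) ℂ := fun x => (Rm x)⁻¹ with hT
  have hTcont : Continuous T := by
    have heq : T = fun x => ((Rm x).det)⁻¹ • (Rm x).adjugate := by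
      funext x
      show (Rm x)⁻¹ = ((Rm x).det)⁻¹ • (Rm x).adjugate
      rw [Matrix.inv_def, Ring.inverse_eq_inv]
    rw [heq]
    exact (hRmcont.matrix_det.inv₀ fun x => (hdet x).ne_zero).smul hRmcont.matrix_adjugate
  set N := mulOp T hTcont with hN
  have hTRm : ∀ x, T x * Rm x = 1 := fun x => Matrix.nonsing_inv_mul _ (hdet x)
  have hRmT : ∀ x, Rm x * T x = 1 := fun x => Matrix.mul_nonsing_inv _ (hdet x)
  have key1 : (algebraMap ℂ _ c - M) * N = 1 := by
    ext g
    rw [ContinuousLinearMap.mul_apply, ContinuousLinearMap.one_apply]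
    have hsub : (algebraMap ℂ _ c - M) (N g) = c • (N g) - M (N g) := by
      rw [ContinuousLinearMap.sub_apply, Algebra.algebraMap_eq_smul_one,
        ContinuousLinearMap.smul_apply, ContinuousLinearMap.one_apply]
    rw [hsub]
    filter_upwards [Lp.coeFn_sub (c • N g) (M (N g)), Lp.coeFn_smul c (N g),
      hM_mvE M hM (N g), mulOp_coeFn T hTcont g] with x h1 h2 h3 h4
    rw [h1]
    simp only [Pi.sub_apply]
    rw [h2, Pi.smul_apply, h3, h4, ← mvE_smul_one, ← mvE_sub, ← mvE_mul]
    have hone : (c • (1 : Matrix (Fin p) (Fin p) ℂ) - S x) * T x = 1 := by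
      have : c • (1 : Matrix (Fin p) (Fin p) ℂ) - S x = Rm x := by
        rw [hRm, Algebra.algebraMap_eq_smul_one]
      rw [this]
      exact hRmT x
    rw [hone, mvE_one]
  have key2 : N * (algebraMap ℂ _ c - M) = 1 := by
    ext g
    rw [ContinuousLinearMap.mul_apply, ContinuousLinearMap.one_apply]
    have hsub : (algebraMap ℂ _ c - M) g = c • g - M g := by
      rw [ContinuousLinearMap.sub_apply, Algebra.algebraMap_eq_smul_one,
        ContinuousLinearMap.smul_apply, ContinuousLinearMap.one_apply]
    rw [hsub]
    filter_upwards [mulOp_coeFn T hTcont (c • g - M g),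
      Lp.coeFn_sub (c • g) (M g), Lp.coeFn_smul c g, hM_mvE M hM g] with x h1 h2 h3 h4
    rw [h1, h2]
    simp only [Pi.sub_apply]
    rw [h3, Pi.smul_apply, h4, ← mvE_smul_one (w := (g : Torus2 → EuclideanSpace ℂ (Fin p)) x),
      ← mvE_sub, ← mvE_mul]
    have hone : T x * (c • (1 : Matrix (Fin p) (Fin p) ℂ) - S x) = 1 := by
      have : c • (1 : Matrix (Fin p) (Fin p) ℂ) - S x = Rm x := by
        rw [hRm, Algebra.algebraMap_eq_smul_one]
      rw [this]
      exact hTRm x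
    rw [hone, mvE_one]
  exact spectrum.mem_iff.1 hc ⟨⟨algebraMap ℂ _ c - M, N, key1, key2⟩, rfl⟩

lemma ofReal_eigenvalue_mem_spectrum (hScont : Continuous S)
    (hSHerm : ∀ x, (S x).IsHermitian)
    (hM : ∀ g, ∀ᵐ x : Torus2, ∀ i : Fin p,
      (M g : Torus2 → EuclideanSpace ℂ (Fin p)) x i =
        ∑ j, S x i j * (g : Torus2 → EuclideanSpace ℂ (Fin p)) x j)
    (x₀ : Torus2) (j : Fin p) :
    (((hSHerm x₀).eigenvalues j : ℂ)) ∈ spectrum ℂ M := by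
  by_contra hspec
  rw [spectrum.notMem_iff] at hspec
  set t : ℂ := ((hSHerm x₀).eigenvalues j : ℂ) with hts
  set v : EuclideanSpace ℂ (Fin p) := (hSHerm x₀).eigenvectorBasis j with hvs
  have hv1 : ‖v‖ = 1 := (hSHerm x₀).eigenvectorBasis.orthonormal.1 j
  have hvec : mvE (S x₀) v = t • v := mvE_eigenvectorBasis (hSHerm x₀) j
  obtain ⟨U, hU⟩ := hspec
  set R := ((U⁻¹ : _) : Lp (E := EuclideanSpace ℂ (Fin p)) 2 (volume : Measure Torus2) →L[ℂ]
    Lp (E := EuclideanSpace ℂ (Fin p)) 2 (volume : Measure Torus2)) with hRs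
  set ε : ℝ := (2 * (‖R‖ + 1))⁻¹ with hεs
  have hRpos : (0:ℝ) < ‖R‖ + 1 := by positivity
  have hε : 0 < ε := by positivity
  -- the set where the symbol is close to its value at x₀
  set hfun : Torus2 → ℝ := fun x => ‖t • v - mvE (S x) v‖ with hhs
  have hhcont : Continuous hfun := by
    apply Continuous.norm
    exact continuous_const.sub
      (continuous_mvE_uncurried.comp (hScont.prodMk continuous_const))
  set U' : Set Torus2 := hfun ⁻¹' Set.Iio ε with hU's
  have hU'open : IsOpen U' := hhcont.isOpen_preimage _ isOpen_Iio
  have hx₀U' : x₀ ∈ U' := by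
    have : hfun x₀ = 0 := by
      rw [hhs]
      simp [hvec]
    simp only [hU's, Set.mem_preimage, Set.mem_Iio, this]
    exact hε
  have hU'meas : MeasurableSet U' := hU'open.measurableSet
  have hvolpos : 0 < volume U' := hU'open.measure_pos volume ⟨x₀, hx₀U'⟩
  have hvolne : volume U' ≠ ⊤ := measure_ne_top _ _
  set g := indicatorConstLp (E := EuclideanSpace ℂ (Fin p)) 2 hU'meas hvolne v with hgs
  have hgnorm : ‖g‖ = (volume U').toReal ^ (1 / (2:ℝ)) := by
    rw [hgs, norm_indicatorConstLp (by norm_num) (by norm_num), hv1, one_mul]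
    norm_num [measureReal_def]
  have hgpos : 0 < ‖g‖ := by
    rw [hgnorm]
    have h1 : 0 < (volume U').toReal := ENNReal.toReal_pos hvolpos.ne' hvolne
    positivity
  -- key estimate
  set A := algebraMap ℂ (Lp (E := EuclideanSpace ℂ (Fin p)) 2 (volume : Measure Torus2) →L[ℂ]
    Lp (E := EuclideanSpace ℂ (Fin p)) 2 (volume : Measure Torus2)) t - M with hAs
  set g' := indicatorConstLp (E := EuclideanSpace ℂ (Fin p)) 2 hU'meas hvolne (ε • v) with hg's
  have hkey : ‖A g‖ ≤ ‖g'‖ := by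
    rw [Lp.norm_def, Lp.norm_def]
    apply ENNReal.toReal_mono (Lp.eLpNorm_ne_top _)
    apply eLpNorm_mono_ae
    have hAg : A g = t • g - M g := by
      rw [hAs, ContinuousLinearMap.sub_apply, Algebra.algebraMap_eq_smul_one,
        ContinuousLinearMap.smul_apply, ContinuousLinearMap.one_apply]
    rw [hAg]
    filter_upwards [Lp.coeFn_sub (t • g) (M g), Lp.coeFn_smul t g, hM_mvE M hM g,
      indicatorConstLp_coeFn (p := (2:ENNReal)) (hs := hU'meas) (hμs := hvolne) (c := v),
      indicatorConstLp_coeFn (p := (2:ENNReal)) (hs := hU'meas) (hμs := hvolne) (c := ε • v)]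
      with x h1 h2 h3 h4 h5
    rw [h1]
    simp only [Pi.sub_apply]
    rw [h2, Pi.smul_apply, h3, h5]
    show ‖t • (⇑g x) - mvE (S x) (⇑g x)‖ ≤ ‖U'.indicator (fun _ => ε • v) x‖
    rw [h4]
    by_cases hx : x ∈ U'
    · rw [Set.indicator_of_mem hx, Set.indicator_of_mem hx]
      have hlt : hfun x < ε := hx
      have : ‖t • v - mvE (S x) v‖ < ε := hlt
      refine this.le.trans ?_
      rw [norm_smul, hv1, mul_one, Real.norm_eq_abs, abs_of_pos hε]
    · rw [Set.indicator_of_notMem hx, Set.indicator_of_notMem hx]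
      have : mvE (S x) (0 : EuclideanSpace ℂ (Fin p)) = 0 := mvE_zero _
      rw [this]
      simp
  have hg'norm : ‖g'‖ = ε * ‖g‖ := by
    rw [hg's, norm_indicatorConstLp (by norm_num) (by norm_num), norm_smul, hv1, mul_one,
      Real.norm_eq_abs, abs_of_pos hε, hgnorm]
    norm_num [measureReal_def]
  -- conclude
  have hrec : g = R (A g) := by
    have h1 : R * A = 1 := by rw [hRs, ← hU]; exact U.inv_mul
    have := congrArg (fun L => L g) h1
    simpa [ContinuousLinearMap.mul_apply] using this.symm
  have hineq : ‖g‖ ≤ ‖R‖ * (ε * ‖g‖) := by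
    calc ‖g‖ = ‖R (A g)‖ := by rw [← hrec]
    _ ≤ ‖R‖ * ‖A g‖ := R.le_opNorm _
    _ ≤ ‖R‖ * ‖g'‖ := by
        apply mul_le_mul_of_nonneg_left hkey (norm_nonneg R)
    _ = ‖R‖ * (ε * ‖g‖) := by rw [hg'norm]
  have hfrac : ‖R‖ * ε < 1 := by
    rw [hεs]
    rw [mul_inv_lt_iff₀ (by positivity), one_mul]
    nlinarith [norm_nonneg R]
  nlinarith [hgpos, norm_nonneg R]

end main

end SpecMulAux

/-- Spectrum of the multiplication operator by a continuous Hermitian matrix-valued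
symbol `S` on `L²(T², ℂᵖ)`: it equals the union over `k` of the closed intervals
`[inf λₖ, sup λₖ]`, where `λ₁(x) ≥ ⋯ ≥ λ_p(x)` are the eigenvalues of `S(x)`. -/
theorem spectrum_multiplication_operator {p : ℕ} (hp : 0 < p)
    (S : Torus2 → Matrix (Fin p) (Fin p) ℂ)
    (hScont : Continuous S)
    (hSHerm : ∀ x, (S x).IsHermitian)
    (μ : Torus2 → Fin p → ℝ)
    (hμanti : ∀ x, Antitone (μ x))
    (hμeig : ∀ x, ∃ σ : Equiv.Perm (Fin p), μ x = (hSHerm x).eigenvalues ∘ σ)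
    (M : Lp (E := EuclideanSpace ℂ (Fin p)) 2 (volume : Measure Torus2) →L[ℂ]
         Lp (E := EuclideanSpace ℂ (Fin p)) 2 (volume : Measure Torus2))
    (hM : ∀ g, ∀ᵐ x : Torus2, ∀ i : Fin p,
      (M g : Torus2 → EuclideanSpace ℂ (Fin p)) x i =
        ∑ j, S x i j * (g : Torus2 → EuclideanSpace ℂ (Fin p)) x j) :
    spectrum ℂ M =
      Complex.ofReal '' ⋃ k : Fin p, Set.Icc (⨅ x, μ x k) (⨆ x, μ x k) := by
  classical
  have hcont : ∀ k : Fin p, Continuous fun x => μ x k := fun k =>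
    SpecMulAux.continuous_mu (hScont := hScont) (hSHerm := hSHerm)
      (hμanti := hμanti) (hμeig := hμeig) k
  have hbddA : ∀ k : Fin p, BddAbove (Set.range fun x => μ x k) := fun k =>
    (isCompact_range (hcont k)).bddAbove
  have hbddB : ∀ k : Fin p, BddBelow (Set.range fun x => μ x k) := fun k =>
    (isCompact_range (hcont k)).bddBelow
  apply Set.Subset.antisymm
  · intro c hc
    obtain ⟨x, hcx⟩ := SpecMulAux.exists_symbol_spectrum M hScont hM hc
    rw [SpecMulAux.spectrum_complex (hSHerm x)] at hcx
    obtain ⟨i, hi⟩ := hcx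
    obtain ⟨σ, hσ⟩ := hμeig x
    have heq : μ x (σ.symm i) = (hSHerm x).eigenvalues i := by
      rw [hσ]
      simp
    refine ⟨μ x (σ.symm i), ?_, ?_⟩
    · exact Set.mem_iUnion.2 ⟨σ.symm i,
        ⟨ciInf_le (hbddB _) x, le_ciSup (hbddA _) x⟩⟩
    · rw [heq]
      exact hi
  · rintro c hc
    obtain ⟨s, hs, rfl⟩ := hc
    obtain ⟨k, hk⟩ := Set.mem_iUnion.1 hs
    obtain ⟨xa, -, hxa'⟩ := isCompact_univ.exists_isMinOn (Set.univ_nonempty)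
      ((hcont k).continuousOn)
    obtain ⟨xb, -, hxb'⟩ := isCompact_univ.exists_isMaxOn (Set.univ_nonempty)
      ((hcont k).continuousOn)
    have hxa : ∀ y : Torus2, μ xa k ≤ μ y k := fun y => hxa' (Set.mem_univ y)
    have hxb : ∀ y : Torus2, μ y k ≤ μ xb k := fun y => hxb' (Set.mem_univ y)
    have hinf : ⨅ x, μ x k = μ xa k :=
      le_antisymm (ciInf_le (hbddB k) xa) (le_ciInf fun y => hxa y)
    have hsup : ⨆ x, μ x k = μ xb k :=
      le_antisymm (ciSup_le fun y => hxb y) (le_ciSup (hbddA k) xb)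
    have hpre : IsPreconnected (Set.range fun x => μ x k) := by
      rw [← Set.image_univ]
      exact isPreconnected_univ.image _ (hcont k).continuousOn
    have hsub := hpre.Icc_subset ⟨xa, rfl⟩ ⟨xb, rfl⟩
    have hmem : s ∈ Set.Icc (μ xa k) (μ xb k) := by
      rw [← hinf, ← hsup]
      exact hk
    obtain ⟨x, hx⟩ := hsub hmem
    obtain ⟨σ, hσ⟩ := hμeig x
    have heq : s = (hSHerm x).eigenvalues (σ k) := by
      rw [← hx]
      show μ x k = _
      rw [hσ]
      rfl
    rw [heq]
    exact SpecMulAux.ofReal_eigenvalue_mem_spectrum M hScont hSHerm hM x (σ k)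

end
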